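/- Let w ∼ w' ∈ Σⁿ be neighboring strings with w[j] ≠ w'[j], compressed by LZ77 with unbounded sliding window, and let B₂ denote the set of indices of type-2 blocks of Compress(w). For each ℓ ≥ 0 let B₂^ℓ = {i ∈ B₂ : ℓ_i = ℓ}. If i* ∈ [t] is the (unique) index with s_{i*} ≤ j ≤ f_{i*}, then |B₂^ℓ| ≤ ℓ for every ℓ ≠ ℓ_{i*}, and |B₂^{ℓ_{i*}}| ≤ ℓ_{i*} + 1. -/

import Mathlib

/-- A single LZ77 block `[q, len, c]`. -/
structure LZBlock (α : Type*) where
  q : ℕ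
  len : ℕ
  c : α

/-- `s_i` (1-indexed start position of the `i`-th block, `i` 0-indexed). -/
def blockStart {α : Type*} (B : List (LZBlock α)) (i : ℕ) : ℕ :=
  1 + ((B.take i).map (fun b => b.len + 1)).sum

/-- `f_i` (1-indexed final position of the `i`-th block, `i` 0-indexed). -/
def blockFin {α : Type*} (B : List (LZBlock α)) (i : ℕ) : ℕ :=
  ((B.take (i + 1)).map (fun b => b.len + 1)).sum

/-- `ℓ_i`, recovered as `f_i - s_i`. -/
def lenAt {α : Type*} (B : List (LZBlock α)) (i : ℕ) : ℕ :=
  blockFin B i - blockStart B i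

/-- Non-overlapping LZ77 parse, sliding window `W`, of the length-`n` string `w`
(1-indexed positions). -/
def IsLZ77Parse {α : Type*} (W n : ℕ) (w : ℕ → α) (B : List (LZBlock α)) : Prop :=
  ((B.map (fun b => b.len + 1)).sum = n) ∧
  ∀ i : Fin B.length,
    ((B.get i).c = w (blockStart B i.1 + (B.get i).len)) ∧
    ((B.get i).len = 0 → (B.get i).q = 0) ∧
    (0 < (B.get i).len →
      1 ≤ (B.get i).q ∧
      blockStart B i.1 ≤ (B.get i).q + W ∧
      (B.get i).q + (B.get i).len ≤ blockStart B i.1 ∧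
      ∀ d < (B.get i).len, w ((B.get i).q + d) = w (blockStart B i.1 + d)) ∧
    (blockStart B i.1 + (B.get i).len + 1 ≤ n →
      ¬ ∃ q', 1 ≤ q' ∧ blockStart B i.1 ≤ q' + W ∧
          q' + (B.get i).len + 1 ≤ blockStart B i.1 ∧
          ∀ d ≤ (B.get i).len, w (q' + d) = w (blockStart B i.1 + d))

/-- LZ77 parse with self-referencing (unbounded window). -/
def IsLZ77SRParse {α : Type*} (n : ℕ) (w : ℕ → α) (B : List (LZBlock α)) : Prop :=
  ((B.map (fun b => b.len + 1)).sum = n) ∧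
  ∀ i : Fin B.length,
    ((B.get i).c = w (blockStart B i.1 + (B.get i).len)) ∧
    ((B.get i).len = 0 → (B.get i).q = 0) ∧
    (0 < (B.get i).len →
      1 ≤ (B.get i).q ∧
      (B.get i).q < blockStart B i.1 ∧
      ∀ d < (B.get i).len, w ((B.get i).q + d) = w (blockStart B i.1 + d)) ∧
    (blockStart B i.1 + (B.get i).len + 1 ≤ n →
      ¬ ∃ q', 1 ≤ q' ∧ q' < blockStart B i.1 ∧
          ∀ d ≤ (B.get i).len, w (q' + d) = w (blockStart B i.1 + d))

/-- `w ∼ w'`: strings of length `n` differing in exactly one position. -/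
def Neighbor {α : Type*} (n : ℕ) (w w' : ℕ → α) : Prop :=
  ∃ j, 1 ≤ j ∧ j ≤ n ∧ w j ≠ w' j ∧ ∀ i, i ≠ j → w i = w' i

/-- `M_i`: the set of (0-indexed) blocks of `B'` that start inside block `i` of `B`. -/
def Mset {α : Type*} (B B' : List (LZBlock α)) (i : ℕ) : Finset ℕ :=
  (Finset.range B'.length).filter
    (fun k => blockStart B i ≤ blockStart B' k ∧ blockStart B' k ≤ blockFin B i)

/-- Indices of type-`m` blocks of `B` (relative to `B'`). -/
def typeSet {α : Type*} (B B' : List (LZBlock α)) (m : ℕ) : Finset ℕ :=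
  (Finset.range B.length).filter (fun i => (Mset B B' i).card = m)

/-- Number of bits used to encode each block. -/
def codeLen (n cardS : ℕ) : ℕ :=
  2 * Nat.clog 2 n + Nat.clog 2 cardS

/-- `B₂^ℓ`: indices of type-2 blocks of `B` whose copy length `ℓ_i` equals `ℓ`. -/
def typeTwoOfLen {α : Type*} (B B' : List (LZBlock α)) (ℓ : ℕ) : Finset ℕ :=
  (Finset.range B.length).filter (fun i => (Mset B B' i).card = 2 ∧ lenAt B i = ℓ)

section LZ77AuxLemmas

variable {α : Type*}

lemma sum_take_mono {l : List ℕ} {a b : ℕ} (h : a ≤ b) : (l.take a).sum ≤ (l.take b).sum := by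
  have h1 := List.sum_take_add_sum_drop (l.take b) a
  rw [List.take_take, min_eq_left h] at h1
  omega

lemma blockStart_one_le (B : List (LZBlock α)) (i : ℕ) : 1 ≤ blockStart B i :=
  Nat.le_add_right 1 _

lemma blockStart_succ (B : List (LZBlock α)) (i : ℕ) :
    blockStart B (i + 1) = blockFin B i + 1 := by
  unfold blockStart blockFin; omega

lemma blockStart_mono (B : List (LZBlock α)) {a b : ℕ} (h : a ≤ b) :
    blockStart B a ≤ blockStart B b := by
  unfold blockStart
  have := sum_take_mono (l := B.map (fun b => b.len + 1)) h
  rw [← List.map_take, ← List.map_take] at this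
  omega

lemma blockFin_eq (B : List (LZBlock α)) {i : ℕ} (hi : i < B.length) :
    blockFin B i = blockStart B i + (B.get ⟨i, hi⟩).len := by
  unfold blockStart blockFin
  rw [List.take_succ, List.map_append, List.sum_append]
  simp [List.getElem?_eq_getElem hi, List.get_eq_getElem]
  omega

lemma blockFin_le_sum (B : List (LZBlock α)) (i : ℕ) :
    blockFin B i ≤ (B.map (fun b => b.len + 1)).sum := by
  unfold blockFin
  rw [List.map_take]
  have := List.sum_take_add_sum_drop (B.map (fun b => b.len + 1)) (i + 1)
  omega

lemma blockStart_lt (B : List (LZBlock α)) {k k₂ : ℕ} (hk : k < B.length) (hkk : k < k₂) :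
    blockStart B k < blockStart B k₂ := by
  have h1 := blockStart_succ B k
  have h2 := blockFin_eq B hk
  have h3 := blockStart_mono B (show k + 1 ≤ k₂ by omega)
  omega

lemma blockFin_whole (B : List (LZBlock α)) {i : ℕ} (h : B.length = i + 1) :
    blockFin B i = (B.map (fun b => b.len + 1)).sum := by
  unfold blockFin
  rw [List.take_of_length_le (by omega)]

lemma mem_Mset {B B' : List (LZBlock α)} {i k : ℕ} :
    k ∈ Mset B B' i ↔ k < B'.length ∧ blockStart B i ≤ blockStart B' k ∧
      blockStart B' k ≤ blockFin B i := by
  simp [Mset, Finset.mem_filter, Finset.mem_range, and_assoc]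

lemma two_mem {B B' : List (LZBlock α)} {i : ℕ} (hcard : (Mset B B' i).card = 2) :
    ∃ k k₂, k < k₂ ∧ k ∈ Mset B B' i ∧ k₂ ∈ Mset B B' i := by
  have h : 1 < (Mset B B' i).card := by omega
  obtain ⟨a, b, ha, hb, hab⟩ := Finset.one_lt_card_iff.mp h
  rcases Nat.lt_or_ge a b with h' | h'
  · exact ⟨a, b, h', ha, hb⟩
  · exact ⟨b, a, by omega, hb, ha⟩

lemma len_pos_of_card2 {B B' : List (LZBlock α)} {i : ℕ} (hi : i < B.length)
    (hcard : (Mset B B' i).card = 2) : 0 < (B.get ⟨i, hi⟩).len := by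
  obtain ⟨k, k₂, hkk, hk, hk₂⟩ := two_mem hcard
  rw [mem_Mset] at hk hk₂
  have h1 : blockStart B' k < blockStart B' k₂ := blockStart_lt _ hk.1 hkk
  have h2 := blockFin_eq B hi
  omega

lemma source_contains_j {n j : ℕ} {w w' : ℕ → α}
    (hagree : ∀ p, p ≠ j → w p = w' p)
    {B B' : List (LZBlock α)}
    (hB : IsLZ77Parse n n w B) (hB' : IsLZ77Parse n n w' B')
    {i : ℕ} (hi : i < B.length)
    (hcard : (Mset B B' i).card = 2)
    (hj : j < blockStart B i) :
    (B.get ⟨i, hi⟩).q ≤ j ∧ j < (B.get ⟨i, hi⟩).q + (B.get ⟨i, hi⟩).len := by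
  obtain ⟨k, k₂, hkk, hk, hk₂⟩ := two_mem hcard
  rw [mem_Mset] at hk hk₂
  obtain ⟨hkl, hsk1, hsk2⟩ := hk
  obtain ⟨hk₂l, hs21, hs22⟩ := hk₂
  have hfin := blockFin_eq B hi
  have hLpos : 0 < (B.get ⟨i, hi⟩).len := len_pos_of_card2 hi hcard
  obtain ⟨hq1, -, hqs, hmatch⟩ := ((hB.2 ⟨i, hi⟩).2.2.1) hLpos
  simp only [Fin.val_mk] at hqs hmatch
  have hsucc : blockStart B' (k + 1) = blockStart B' k + (B'.get ⟨k, hkl⟩).len + 1 := by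
    have := blockStart_succ B' k
    have := blockFin_eq B' hkl
    omega
  have hmono : blockStart B' (k + 1) ≤ blockStart B' k₂ :=
    blockStart_mono B' (by omega)
  have key : blockStart B' k + (B'.get ⟨k, hkl⟩).len + 1 ≤
      blockStart B i + (B.get ⟨i, hi⟩).len := by omega
  have hn : blockFin B i ≤ n := by
    have h1 := blockFin_le_sum B i
    rw [hB.1] at h1
    exact h1
  by_contra hcon
  push_neg at hcon
  have hj' : j < (B.get ⟨i, hi⟩).q ∨ (B.get ⟨i, hi⟩).q + (B.get ⟨i, hi⟩).len ≤ j := by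
    rcases Nat.lt_or_ge j (B.get ⟨i, hi⟩).q with h | h
    · exact Or.inl h
    · exact Or.inr (hcon h)
  have hmax := (hB'.2 ⟨k, hkl⟩).2.2.2
  simp only [Fin.val_mk] at hmax
  refine hmax (by omega) ⟨(B.get ⟨i, hi⟩).q + (blockStart B' k - blockStart B i),
    by omega, by omega, by omega, fun d hd => ?_⟩
  set δ := blockStart B' k - blockStart B i with hδ
  have e1 : (B.get ⟨i, hi⟩).q + δ + d ≠ j := by omega
  have e2 : blockStart B' k + d ≠ j := by omega
  have h3 := hmatch (δ + d) (by omega)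
  calc w' ((B.get ⟨i, hi⟩).q + δ + d) = w ((B.get ⟨i, hi⟩).q + δ + d) := (hagree _ e1).symm
    _ = w (blockStart B i + (δ + d)) := by rw [Nat.add_assoc]; exact h3
    _ = w (blockStart B' k + d) := by
        rw [show blockStart B i + (δ + d) = blockStart B' k + d by omega]
    _ = w' (blockStart B' k + d) := hagree _ e2

lemma q_inj {n j : ℕ} {w w' : ℕ → α}
    (hagree : ∀ p, p ≠ j → w p = w' p)
    {B B' : List (LZBlock α)}
    (hB : IsLZ77Parse n n w B) (hB' : IsLZ77Parse n n w' B')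
    {i i' : ℕ} (hi : i < B.length) (hi' : i' < B.length) (hii : i < i')
    (hcard' : (Mset B B' i').card = 2)
    (hj : j < blockStart B i)
    (hlen : (B.get ⟨i, hi⟩).len = (B.get ⟨i', hi'⟩).len)
    (hq : (B.get ⟨i, hi⟩).q = (B.get ⟨i', hi'⟩).q) : False := by
  obtain ⟨m, m₂, hmm, hm, hm₂⟩ := two_mem hcard'
  rw [mem_Mset] at hm hm₂
  obtain ⟨hml, hsm1, hsm2⟩ := hm
  obtain ⟨hm₂l, hs21, hs22⟩ := hm₂
  have hfin := blockFin_eq B hi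
  have hfin' := blockFin_eq B hi'
  have hLpos' : 0 < (B.get ⟨i', hi'⟩).len := len_pos_of_card2 hi' hcard'
  have hLpos : 0 < (B.get ⟨i, hi⟩).len := by omega
  obtain ⟨hq1, -, hqs, hmatch⟩ := ((hB.2 ⟨i, hi⟩).2.2.1) hLpos
  simp only [Fin.val_mk] at hqs hmatch
  obtain ⟨hq1', -, hqs', hmatch'⟩ := ((hB.2 ⟨i', hi'⟩).2.2.1) hLpos'
  simp only [Fin.val_mk] at hqs' hmatch'
  have hsucc : blockStart B' (m + 1) = blockStart B' m + (B'.get ⟨m, hml⟩).len + 1 := by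
    have := blockStart_succ B' m
    have := blockFin_eq B' hml
    omega
  have hmono : blockStart B' (m + 1) ≤ blockStart B' m₂ :=
    blockStart_mono B' (by omega)
  have key : blockStart B' m + (B'.get ⟨m, hml⟩).len + 1 ≤
      blockStart B i' + (B.get ⟨i', hi'⟩).len := by omega
  have hn : blockFin B i' ≤ n := by
    have h1 := blockFin_le_sum B i'
    rw [hB.1] at h1
    exact h1
  -- f_i < s_{i'}
  have hsep : blockFin B i < blockStart B i' := by
    have h1 := blockStart_succ B i
    have h2 := blockStart_mono B (show i + 1 ≤ i' by omega)
    omega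
  have hmax := (hB'.2 ⟨m, hml⟩).2.2.2
  simp only [Fin.val_mk] at hmax
  refine hmax (by omega) ⟨blockStart B i + (blockStart B' m - blockStart B i'),
    by have := blockStart_one_le B i; omega, by omega, by omega, fun d hd => ?_⟩
  set δ := blockStart B' m - blockStart B i' with hδ
  have e1 : blockStart B i + δ + d ≠ j := by omega
  have e2 : blockStart B' m + d ≠ j := by
    have := blockStart_mono B (show i ≤ i' by omega)
    omega
  have h3 := hmatch (δ + d) (by omega)
  have h4 := hmatch' (δ + d) (by omega)
  rw [hq] at h3
  calc w' (blockStart B i + δ + d) = w (blockStart B i + δ + d) := (hagree _ e1).symm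
    _ = w ((B.get ⟨i', hi'⟩).q + (δ + d)) := by rw [Nat.add_assoc]; exact h3.symm
    _ = w (blockStart B i' + (δ + d)) := h4
    _ = w (blockStart B' m + d) := by
        rw [show blockStart B i' + (δ + d) = blockStart B' m + d by omega]
    _ = w' (blockStart B' m + d) := hagree _ e2

lemma not_len_lt {n j : ℕ} {u u' : ℕ → α} {C C' : List (LZBlock α)}
    (hu : IsLZ77Parse n n u C) (hu' : IsLZ77Parse n n u' C')
    (hagr : ∀ p, p < j → u p = u' p) (hjn : j ≤ n)
    {i : ℕ} (hi : i < C.length) (hi' : i < C'.length)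
    (hstart : blockStart C' i = blockStart C i)
    (hfin : blockStart C i + (C.get ⟨i, hi⟩).len < j) :
    ¬ (C.get ⟨i, hi⟩).len < (C'.get ⟨i, hi'⟩).len := by
  intro hlt
  have hL'pos : 0 < (C'.get ⟨i, hi'⟩).len := by omega
  obtain ⟨hq1, -, hqs, hmatch⟩ := ((hu'.2 ⟨i, hi'⟩).2.2.1) hL'pos
  simp only [Fin.val_mk] at hqs hmatch
  rw [hstart] at hqs hmatch
  have hmax := (hu.2 ⟨i, hi⟩).2.2.2
  simp only [Fin.val_mk] at hmax
  refine hmax (by omega) ⟨(C'.get ⟨i, hi'⟩).q, hq1, by omega, by omega, fun d hd => ?_⟩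
  have h1 := hmatch d (by omega)
  have e1 : (C'.get ⟨i, hi'⟩).q + d < j := by omega
  have e2 : blockStart C i + d < j := by omega
  rw [hagr _ e1, hagr _ e2]
  exact h1

lemma len_eq_core {n j : ℕ} {w w' : ℕ → α} {B B' : List (LZBlock α)}
    (hB : IsLZ77Parse n n w B) (hB' : IsLZ77Parse n n w' B')
    (hagree : ∀ p, p ≠ j → w p = w' p) (hjn : j ≤ n)
    {i : ℕ} (hi : i < B.length) (hi' : i < B'.length)
    (hstart : blockStart B' i = blockStart B i) (hfin : blockFin B i < j) :
    (B'.get ⟨i, hi'⟩).len = (B.get ⟨i, hi⟩).len := by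
  have hfe := blockFin_eq B hi
  have hagr : ∀ p, p < j → w p = w' p := fun p hp => hagree p (by omega)
  have hagr' : ∀ p, p < j → w' p = w p := fun p hp => (hagree p (by omega)).symm
  have h1 := not_len_lt hB hB' hagr hjn hi hi' hstart (by omega)
  rcases Nat.lt_trichotomy (B'.get ⟨i, hi'⟩).len (B.get ⟨i, hi⟩).len with h | h | h
  · exfalso
    exact not_len_lt hB' hB hagr' hjn hi' hi hstart.symm (by omega) h
  · exact h
  · exact absurd h h1

lemma prefix_det {n j : ℕ} {w w' : ℕ → α} {B B' : List (LZBlock α)}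
    (hB : IsLZ77Parse n n w B) (hB' : IsLZ77Parse n n w' B')
    (hagree : ∀ p, p ≠ j → w p = w' p) (hj1 : 1 ≤ j) (hjn : j ≤ n) :
    ∀ i, ∀ hi : i < B.length, blockFin B i < j →
      ∃ hi' : i < B'.length, blockStart B' i = blockStart B i ∧
        (B'.get ⟨i, hi'⟩).len = (B.get ⟨i, hi⟩).len := by
  intro i
  induction i with
  | zero =>
    intro hi hfin
    have hi' : 0 < B'.length := by
      by_contra hcon
      have h0 : B'.length = 0 := by omega
      have : (B'.map (fun b => b.len + 1)).sum = 0 := by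
        rw [List.eq_nil_of_length_eq_zero h0]; simp
      rw [hB'.1] at this
      omega
    have hstart : blockStart B' 0 = blockStart B 0 := by
      unfold blockStart; simp
    exact ⟨hi', hstart, len_eq_core hB hB' hagree hjn hi hi' hstart hfin⟩
  | succ m ih =>
    intro hi hfin
    have hm : m < B.length := by omega
    have hfm : blockFin B m < j := by
      have h1 := blockStart_succ B m
      have h2 := blockFin_eq B hi
      omega
    obtain ⟨hm', hst, hln⟩ := ih hm hfm
    have hstart : blockStart B' (m + 1) = blockStart B (m + 1) := by
      rw [blockStart_succ, blockStart_succ, blockFin_eq B hm, blockFin_eq B' hm', hst, hln]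
    have hi' : m + 1 < B'.length := by
      by_contra hcon
      have hble : B'.length = m + 1 := by omega
      have hwhole := blockFin_whole B' hble
      rw [hB'.1] at hwhole
      have h2 := blockFin_eq B' hm'
      have h3 := blockFin_eq B hm
      omega
    exact ⟨hi', hstart, len_eq_core hB hB' hagree hjn hi hi' hstart hfin⟩

lemma Mset_card_one {n j : ℕ} {w w' : ℕ → α} {B B' : List (LZBlock α)}
    (hB : IsLZ77Parse n n w B) (hB' : IsLZ77Parse n n w' B')
    (hagree : ∀ p, p ≠ j → w p = w' p) (hj1 : 1 ≤ j) (hjn : j ≤ n)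
    {i : ℕ} (hi : i < B.length) (hfin : blockFin B i < j) :
    Mset B B' i = {i} := by
  obtain ⟨hi', hst, hln⟩ := prefix_det hB hB' hagree hj1 hjn i hi hfin
  ext k
  rw [mem_Mset, Finset.mem_singleton]
  constructor
  · rintro ⟨hkl, h1, h2⟩
    by_contra hne
    rcases Nat.lt_or_ge k i with hk | hk
    · have := blockStart_lt B' hkl hk
      omega
    · have hk' : i + 1 ≤ k := by omega
      have h3 := blockStart_mono B' hk'
      have h4 := blockStart_succ B' i
      have h5 := blockFin_eq B' hi'
      have h6 := blockFin_eq B hi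
      omega
  · rintro rfl
    have h6 := blockFin_eq B hi
    exact ⟨hi', by omega, by omega⟩

lemma eq_istar_of_mem {B : List (LZBlock α)} {i istar j : ℕ}
    (hi : i < B.length) (histar : istar < B.length)
    (h1 : blockStart B i ≤ j) (h2 : j ≤ blockFin B i)
    (hs : blockStart B istar ≤ j) (hf : j ≤ blockFin B istar) : i = istar := by
  by_contra hne
  rcases Nat.lt_or_ge i istar with h | h
  · have hm := blockStart_mono B (show i + 1 ≤ istar by omega)
    have := blockStart_succ B i
    omega
  · have hlt : istar < i := by omega
    have hm := blockStart_mono B (show istar + 1 ≤ i by omega)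
    have := blockStart_succ B istar
    omega

def qAt {α : Type*} (B : List (LZBlock α)) (i : ℕ) : ℕ :=
  (B[i]?.map LZBlock.q).getD 0

lemma qAt_eq {B : List (LZBlock α)} {i : ℕ} (hi : i < B.length) :
    qAt B i = (B.get ⟨i, hi⟩).q := by
  simp [qAt, List.getElem?_eq_getElem hi, List.get_eq_getElem]

end LZ77AuxLemmas

/-- Claim: counting type-2 blocks of each length.
Let `w ∼ w'` differ exactly at position `j`, compressed by LZ77 with unbounded
window, and let `i*` be the index with `s_{i*} ≤ j ≤ f_{i*}`. Then
`|B₂^ℓ| ≤ ℓ` for every `ℓ ≠ ℓ_{i*}`, and `|B₂^{ℓ_{i*}}| ≤ ℓ_{i*} + 1`. -/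
theorem lz77_typeTwo_len_count {α : Type*} (n : ℕ) (w w' : ℕ → α) (j : ℕ)
    (hj1 : 1 ≤ j) (hjn : j ≤ n) (hdiff : w j ≠ w' j)
    (hagree : ∀ i, i ≠ j → w i = w' i)
    (B B' : List (LZBlock α))
    (hB : IsLZ77Parse n n w B) (hB' : IsLZ77Parse n n w' B')
    (istar : ℕ) (histar : istar < B.length)
    (hs : blockStart B istar ≤ j) (hf : j ≤ blockFin B istar) :
    (∀ ℓ : ℕ, ℓ ≠ lenAt B istar → (typeTwoOfLen B B' ℓ).card ≤ ℓ) ∧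
      (typeTwoOfLen B B' (lenAt B istar)).card ≤ lenAt B istar + 1 := by
  --

  classical
  have key : ∀ ℓ : ℕ, ∀ i ∈ typeTwoOfLen B B' ℓ, i ≠ istar →
      ∃ hi : i < B.length, j < blockStart B i ∧ (Mset B B' i).card = 2 ∧
        (B.get ⟨i, hi⟩).len = ℓ := by
    intro ℓ i hiT hne
    rw [typeTwoOfLen, Finset.mem_filter, Finset.mem_range] at hiT
    obtain ⟨hi, hcard, hlen⟩ := hiT
    have hfe := blockFin_eq B hi
    refine ⟨hi, ?_, hcard, ?_⟩
    · rcases Nat.lt_or_ge j (blockStart B i) with h | h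
      · exact h
      · exfalso
        rcases Nat.lt_or_ge (blockFin B i) j with h2 | h2
        · have hsing := Mset_card_one hB hB' hagree hj1 hjn hi h2
          rw [hsing] at hcard
          simp at hcard
        · exact hne (eq_istar_of_mem hi histar h h2 hs hf)
    · unfold lenAt at hlen
      have := blockStart_one_le B i
      omega
  have inj : ∀ ℓ : ℕ, ((typeTwoOfLen B B' ℓ).erase istar).card ≤ ℓ := by
    intro ℓ
    have hle := Finset.card_le_card_of_injOn (f := qAt B)
      (s := (typeTwoOfLen B B' ℓ).erase istar) (t := Finset.Ioc (j - ℓ) j) ?_ ?_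
    · have hc : (Finset.Ioc (j - ℓ) j).card = j - (j - ℓ) := Nat.card_Ioc _ _
      omega
    · intro i hi
      obtain ⟨hne, hiT⟩ := Finset.mem_erase.mp hi
      obtain ⟨hlt, hjlt, hcard, hlen⟩ := key ℓ i hiT hne
      have hsrc := source_contains_j hagree hB hB' hlt hcard hjlt
      have hq1 : 1 ≤ (B.get ⟨i, hlt⟩).q :=
        (((hB.2 ⟨i, hlt⟩).2.2.1) (len_pos_of_card2 hlt hcard)).1
      rw [qAt_eq hlt, Finset.mem_coe, Finset.mem_Ioc]
      omega
    · intro a ha b hb hab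
      by_contra hne
      obtain ⟨hnea, haT⟩ := Finset.mem_erase.mp ha
      obtain ⟨hneb, hbT⟩ := Finset.mem_erase.mp hb
      obtain ⟨hla, hja, hcarda, hlena⟩ := key ℓ a haT hnea
      obtain ⟨hlb, hjb, hcardb, hlenb⟩ := key ℓ b hbT hneb
      rw [qAt_eq hla, qAt_eq hlb] at hab
      rcases Nat.lt_trichotomy a b with h | h | h
      · exact q_inj hagree hB hB' hla hlb h hcardb hja (by omega) hab
      · exact hne h
      · exact q_inj hagree hB hB' hlb hla h hcarda hjb (by omega) hab.symm
  constructor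
  · intro ℓ hℓ
    have hnot : istar ∉ typeTwoOfLen B B' ℓ := by
      intro hmem
      rw [typeTwoOfLen, Finset.mem_filter] at hmem
      exact hℓ hmem.2.2.symm
    rw [← Finset.erase_eq_of_notMem hnot]
    exact inj ℓ
  · by_cases hmem : istar ∈ typeTwoOfLen B B' (lenAt B istar)
    · have h1 := Finset.card_erase_of_mem hmem
      have h2 := inj (lenAt B istar)
      have h3 : 1 ≤ (typeTwoOfLen B B' (lenAt B istar)).card :=
        Finset.card_pos.mpr ⟨istar, hmem⟩
      omega
    · rw [← Finset.erase_eq_of_notMem hmem]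
      have := inj (lenAt B istar)
      omega
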